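/- Let a ∈ L^∞(ℝ) be invertible in L^∞(ℝ) (i.e. a⁻¹ ∈ L^∞(ℝ)), and suppose the Wiener–Hopf operator W(a ã⁻¹) is invertible on L²(ℝ⁺). Then the operator W(a)+H(ã) is invertible on L²(ℝ⁺) and (W(a)+H(ã))⁻¹ = (I − H(ã a⁻¹))∘W(a ã⁻¹)⁻¹∘W(ã⁻¹) + H(a⁻¹). -/

import Mathlib

open MeasureTheory Complex Filter Set

noncomputable section

namespace WienerHopf

/-- The space `L²(ℝ;ℂ)`. -/
abbrev L2 : Type := Lp ℂ 2 (volume : Measure ℝ)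

open Classical in
/-- Multiplication by a function `a : ℝ → ℂ`, as a bounded operator on `L²(ℝ)`.
(It is defined to be `0` in the degenerate case where `a` is not essentially bounded.) -/
def mul (a : ℝ → ℂ) : L2 →L[ℂ] L2 :=
  if h : MemLp a ⊤ (volume : Measure ℝ) then
    LinearMap.mkContinuous
      { toFun := fun f => ((Lp.memLp f).smul (r := 2) h).toLp (a • (f : ℝ → ℂ))
        map_add' := by
          intro f g
          rw [← MemLp.toLp_add]
          apply Lp.ext
          filter_upwards [MemLp.coeFn_toLp ((Lp.memLp (f + g)).smul (r := 2) h),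
            MemLp.coeFn_toLp (((Lp.memLp f).smul (r := 2) h).add
              ((Lp.memLp g).smul (r := 2) h)),
            Lp.coeFn_add f g] with t h1 h2 h3
          rw [h1, h2]
          simp only [Pi.smul_apply, smul_eq_mul, Pi.mul_apply, Pi.add_apply]
          rw [h3]
          simp [Pi.add_apply, mul_add]
        map_smul' := by
          intro m f
          simp only [RingHom.id_apply]
          rw [← MemLp.toLp_const_smul]
          apply Lp.ext
          filter_upwards [MemLp.coeFn_toLp ((Lp.memLp (m • f)).smul (r := 2) h),
            MemLp.coeFn_toLp (((Lp.memLp f).smul (r := 2) h).const_smul m),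
            Lp.coeFn_smul m f] with t h1 h2 h3
          rw [h1, h2]
          simp only [Pi.smul_apply, smul_eq_mul, Pi.mul_apply]
          rw [h3]
          simp only [Pi.smul_apply, smul_eq_mul]
          ring
        }
      (eLpNorm a ⊤ (volume : Measure ℝ)).toReal
      (by
        intro f
        simp only [LinearMap.coe_mk, AddHom.coe_mk]
        rw [Lp.norm_toLp, Lp.norm_def]
        have hle := eLpNorm_smul_le_mul_eLpNorm (Lp.aestronglyMeasurable f) h.1
          (p := ⊤) (q := 2) (r := 2)
        calc (eLpNorm (a • (f : ℝ → ℂ)) 2 (volume : Measure ℝ)).toReal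
            ≤ (eLpNorm a ⊤ (volume : Measure ℝ) * eLpNorm (f : ℝ → ℂ) 2 volume).toReal := by
              apply ENNReal.toReal_mono _ hle
              exact ENNReal.mul_ne_top h.2.ne (Lp.eLpNorm_lt_top f).ne
          _ = (eLpNorm a ⊤ (volume : Measure ℝ)).toReal *
              (eLpNorm (f : ℝ → ℂ) 2 (volume : Measure ℝ)).toReal := ENNReal.toReal_mul)
  else 0

theorem mul_coeFn {a : ℝ → ℂ} (h : MemLp a ⊤ (volume : Measure ℝ)) (f : L2) :
    (mul a f : ℝ → ℂ) =ᵐ[volume] fun t => a t * f t := by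
  rw [mul, dif_pos h]
  show ⇑(((Lp.memLp f).smul (r := 2) h).toLp (a • (f : ℝ → ℂ))) =ᵐ[volume]
    fun t => a t * f t
  exact (MemLp.coeFn_toLp _).trans
    (Eventually.of_forall fun t => by simp [Pi.smul_apply])

/-- `(-t)`-reflection is measure preserving. -/
theorem negMP : MeasurePreserving (fun t : ℝ => -t) volume volume :=
  Measure.measurePreserving_neg (volume : Measure ℝ)

/-- The reflection operator `(Jφ)(t) = φ(-t)` on `L²(ℝ)`. -/
def reflect : L2 →L[ℂ] L2 :=
  LinearMap.mkContinuous
    { toFun := ⇑(Lp.compMeasurePreserving (fun t : ℝ => -t) negMP)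
      map_add' := fun f g => map_add _ f g
      map_smul' := by
        intro m g
        simp only [RingHom.id_apply]
        apply Lp.ext
        filter_upwards [Lp.coeFn_compMeasurePreserving (f := fun t : ℝ => -t) (m • g) negMP,
          Lp.coeFn_smul m (Lp.compMeasurePreserving (fun t : ℝ => -t) negMP g),
          Lp.coeFn_compMeasurePreserving (f := fun t : ℝ => -t) g negMP,
          negMP.quasiMeasurePreserving.ae_eq_comp (Lp.coeFn_smul m g)] with t h1 h2 h3 h4
        rw [h1, h2, h4]
        simp only [Function.comp_apply, Pi.smul_apply, smul_eq_mul]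
        rw [h3]
        simp only [Function.comp_apply]
      }
    1
    (by
      intro g
      rw [one_mul]
      exact le_of_eq (Lp.norm_compMeasurePreserving g _))

theorem reflect_coeFn (g : L2) :
    (reflect g : ℝ → ℂ) =ᵐ[volume] fun t => g (-t) :=
  Lp.coeFn_compMeasurePreserving (f := fun t : ℝ => -t) g negMP

/-- The indicator function of `(0,∞)`. -/
def chiPlus : ℝ → ℂ := Set.indicator (Set.Ioi (0 : ℝ)) (fun _ => 1)

theorem chiPlus_memℒp : MemLp chiPlus ⊤ (volume : Measure ℝ) :=
  (memLp_top_const (1 : ℂ)).indicator measurableSet_Ioi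

/-- The subspace of `L²(ℝ)` consisting of functions vanishing a.e. on `(-∞,0)`;
it is identified with `L²(ℝ⁺)`. -/
def posSubspace : Submodule ℂ L2 where
  carrier := {f : L2 | ∀ᵐ t : ℝ ∂volume, t < 0 → (f : ℝ → ℂ) t = 0}
  zero_mem' := by
    filter_upwards [Lp.coeFn_zero ℂ 2 (volume : Measure ℝ)] with t ht _
    simp [ht]
  add_mem' := by
    intro f g hf hg
    filter_upwards [hf, hg, Lp.coeFn_add f g] with t h1 h2 h3 hlt
    rw [h3]
    simp [Pi.add_apply, h1 hlt, h2 hlt]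
  smul_mem' := by
    intro m f hf
    filter_upwards [hf, Lp.coeFn_smul m f] with t h1 h2 hlt
    rw [h2]
    simp [Pi.smul_apply, h1 hlt]

/-- `L²(ℝ⁺)`, realized as the subspace of `L²(ℝ)` of functions vanishing a.e. on `(-∞,0)`. -/
abbrev Lp2Plus : Type := ↥posSubspace

theorem chiPlus_mul_mem (g : L2) : mul chiPlus g ∈ posSubspace := by
  filter_upwards [mul_coeFn chiPlus_memℒp g] with t ht hlt
  rw [ht, chiPlus, Set.indicator_of_notMem (by simpa using hlt.le), zero_mul]

/-- Compression of an operator on `L²(ℝ)` to the subspace `L²(ℝ⁺)`: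
`φ ↦ χ₊ ⬝ (T φ)`. -/
def compress (T : L2 →L[ℂ] L2) : Lp2Plus →L[ℂ] Lp2Plus :=
  LinearMap.mkContinuous
    { toFun := fun φ => ⟨mul chiPlus (T φ.val), chiPlus_mul_mem _⟩
      map_add' := by intro φ ψ; apply Subtype.ext; simp
      map_smul' := by intro m φ; apply Subtype.ext; simp }
    ‖(mul chiPlus).comp T‖
    (by intro φ; exact ((mul chiPlus).comp T).le_opNorm φ.val)

theorem compress_coe (T : L2 →L[ℂ] L2) (φ : Lp2Plus) :
    (compress T φ : L2) = mul chiPlus (T φ.val) := rfl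

/-- An abstract realization of the Fourier transform
`(𝓕φ)(ξ) = ∫ e^{iξx} φ(x) dx` on `L²(ℝ)` (together with its inverse
`(𝓕⁻¹ψ)(x) = (2π)⁻¹ ∫ e^{-iξx} ψ(ξ) dξ`): a continuous linear bijection of `L²(ℝ)`
that is given by the above integral formulas on integrable functions.  By density
of `L¹ ∩ L²` in `L²`, these properties determine the operator uniquely, and by the
Fourier–Plancherel theory such an operator exists. -/
structure FourierL2 where
  equiv : L2 ≃L[ℂ] L2
  forward : ∀ φ : L2, Integrable (φ : ℝ → ℂ) volume →
      (equiv φ : ℝ → ℂ) =ᵐ[volume]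
        fun ξ : ℝ => ∫ x : ℝ, Complex.exp (Complex.I * ξ * x) * φ x
  inverse : ∀ ψ : L2, Integrable (ψ : ℝ → ℂ) volume →
      (equiv.symm ψ : ℝ → ℂ) =ᵐ[volume]
        fun x : ℝ => (2 * Real.pi : ℂ)⁻¹ * ∫ ξ : ℝ, Complex.exp (-(Complex.I * ξ * x)) * ψ ξ

/-- `W⁰(a) = 𝓕⁻¹ M_a 𝓕`, the convolution (Fourier multiplier) operator on `L²(ℝ)`. -/
def W0 (F : FourierL2) (a : ℝ → ℂ) : L2 →L[ℂ] L2 :=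
  (F.equiv.symm : L2 →L[ℂ] L2).comp ((mul a).comp (F.equiv : L2 →L[ℂ] L2))

/-- The Wiener–Hopf operator `W(a) = χ₊ W⁰(a)` on `L²(ℝ⁺)`. -/
def W (F : FourierL2) (a : ℝ → ℂ) : Lp2Plus →L[ℂ] Lp2Plus :=
  compress (W0 F a)

/-- The Hankel operator `H(b) = χ₊ W⁰(b) J` on `L²(ℝ⁺)`. -/
def H (F : FourierL2) (b : ℝ → ℂ) : Lp2Plus →L[ℂ] Lp2Plus :=
  compress ((W0 F b).comp reflect)

/-- `a` is invertible in the Banach algebra `L^∞(ℝ)`: `a ∈ L^∞`, `a ≠ 0` a.e.,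
and the pointwise inverse `a⁻¹` again belongs to `L^∞`. -/
def InvertibleLinf (a : ℝ → ℂ) : Prop :=
  MemLp a ⊤ (volume : Measure ℝ) ∧ (∀ᵐ t : ℝ ∂volume, a t ≠ 0) ∧
    MemLp (fun t => (a t)⁻¹) ⊤ (volume : Measure ℝ)

/-- `(a,b)` is a matching pair: `a, b` are invertible in `L^∞(ℝ)` and
`a(t)a(-t) = b(t)b(-t)` for a.e. `t`. -/
def MatchingPair (a b : ℝ → ℂ) : Prop :=
  InvertibleLinf a ∧ InvertibleLinf b ∧
    ∀ᵐ t : ℝ ∂volume, a t * a (-t) = b t * b (-t)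



-- auxiliary lemmas, stage 1

/-- `mul` only depends on the a.e.-class of the symbol. -/
theorem mul_congr {a b : ℝ → ℂ} (hab : a =ᵐ[volume] b) : mul a = mul b := by
  by_cases h : MemLp a ⊤ (volume : Measure ℝ)
  · have hb : MemLp b ⊤ (volume : Measure ℝ) := h.ae_eq hab
    ext f
    filter_upwards [mul_coeFn h f, mul_coeFn hb f, hab] with t h1 h2 h3
    rw [h1, h2, h3]
  · have hb : ¬ MemLp b ⊤ (volume : Measure ℝ) := fun hb => h (hb.ae_eq hab.symm)
    rw [mul, mul, dif_neg h, dif_neg hb]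

theorem mul_mul {a b : ℝ → ℂ} (ha : MemLp a ⊤ (volume : Measure ℝ))
    (hb : MemLp b ⊤ (volume : Measure ℝ)) :
    (mul a).comp (mul b) = mul (fun t => a t * b t) := by
  have hab : MemLp (fun t => a t * b t) ⊤ (volume : Measure ℝ) := by
    have := hb.smul (r := ⊤) ha
    simpa [Pi.smul_apply, smul_eq_mul, Pi.mul_def] using this
  ext f
  filter_upwards [mul_coeFn ha (mul b f), mul_coeFn hab f,
    mul_coeFn hb f] with t h1 h2 h3
  simp only [ContinuousLinearMap.comp_apply]
  rw [h1, h2, h3, mul_assoc]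

theorem mul_one' : mul (fun _ : ℝ => (1 : ℂ)) = ContinuousLinearMap.id ℂ L2 := by
  ext f
  filter_upwards [mul_coeFn (memLp_top_const (1 : ℂ)) f] with t h1
  rw [h1]; simp

theorem reflect_reflect : reflect.comp reflect = ContinuousLinearMap.id ℂ L2 := by
  ext f
  filter_upwards [reflect_coeFn (reflect f),
    negMP.quasiMeasurePreserving.ae_eq_comp (reflect_coeFn f)] with t h1 h2
  simp only [ContinuousLinearMap.comp_apply, ContinuousLinearMap.id_apply]
  rw [h1]
  have := h2
  simpa [Function.comp] using this
theorem memℒp_reflect {a : ℝ → ℂ} (ha : MemLp a ⊤ (volume : Measure ℝ)) :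
    MemLp (fun t => a (-t)) ⊤ (volume : Measure ℝ) :=
  ha.comp_measurePreserving negMP

theorem reflect_mul {a : ℝ → ℂ} (ha : MemLp a ⊤ (volume : Measure ℝ)) :
    reflect.comp (mul a) = (mul (fun t => a (-t))).comp reflect := by
  ext f
  filter_upwards [reflect_coeFn (mul a f),
    negMP.quasiMeasurePreserving.ae_eq_comp (mul_coeFn ha f),
    mul_coeFn (memℒp_reflect ha) (reflect f),
    reflect_coeFn f] with t h1 h2 h3 h4
  simp only [ContinuousLinearMap.comp_apply]
  rw [h1, h3, h4]
  simpa [Function.comp] using h2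
theorem integrable_reflect {f : L2} (hf : Integrable (⇑f) volume) :
    Integrable (⇑(reflect f)) volume := by
  have h1 : Integrable (fun t : ℝ => f (-t)) volume :=
    memLp_one_iff_integrable.mp
      ((memLp_one_iff_integrable.mpr hf).comp_measurePreserving negMP)
  exact h1.congr (reflect_coeFn f).symm

theorem fourier_reflect_apply (F : FourierL2) {φ : L2} (hφ : Integrable (⇑φ) volume) :
    F.equiv (reflect φ) = reflect (F.equiv φ) := by
  apply Lp.ext
  have h1 := F.forward (reflect φ) (integrable_reflect hφ)
  have h2 := F.forward φ hφ
  have h3 : (fun ξ : ℝ => ∫ x : ℝ, Complex.exp (Complex.I * ξ * x) * (reflect φ) x)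
      = fun ξ : ℝ => ∫ x : ℝ, Complex.exp (Complex.I * (-ξ) * x) * φ x := by
    funext ξ
    rw [← integral_neg_eq_self (fun x : ℝ => Complex.exp (Complex.I * (-ξ) * x) * φ x) volume]
    apply integral_congr_ae
    filter_upwards [reflect_coeFn φ] with x hx
    rw [hx]
    push_cast
    ring_nf
  rw [h3] at h1
  filter_upwards [h1, reflect_coeFn (F.equiv φ),
    negMP.quasiMeasurePreserving.ae_eq_comp h2] with t ht1 ht2 ht3
  rw [ht1, ht2]
  have : (F.equiv φ : ℝ → ℂ) (-t) = ∫ x : ℝ, Complex.exp (Complex.I * (-t : ℝ) * x) * φ x := by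
    simpa [Function.comp] using ht3
  rw [this]
  simp [Complex.ofReal_neg]
theorem simpleFunc_integrable (s : Lp.simpleFunc ℂ 2 (volume : Measure ℝ)) :
    Integrable (⇑(s : L2)) volume := by
  have h1 : MemLp (⇑(Lp.simpleFunc.toSimpleFunc s)) 2 (volume : Measure ℝ) :=
    Lp.simpleFunc.memLp s
  have h2 : Integrable (⇑(Lp.simpleFunc.toSimpleFunc s)) volume :=
    (SimpleFunc.memLp_iff_integrable (two_ne_zero) (by norm_num)).mp h1
  exact h2.congr (Lp.simpleFunc.toSimpleFunc_eq_toFun s)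

theorem fourier_reflect (F : FourierL2) :
    (F.equiv : L2 →L[ℂ] L2).comp reflect
      = reflect.comp (F.equiv : L2 →L[ℂ] L2) := by
  apply DFunLike.coe_injective
  refine (Lp.simpleFunc.denseRange (E := ℂ) (μ := (volume : Measure ℝ)) (p := 2)
    (by norm_num)).equalizer
    (g := ⇑((F.equiv : L2 →L[ℂ] L2).comp reflect))
    (h := ⇑(reflect.comp (F.equiv : L2 →L[ℂ] L2))) ?_ ?_ ?_
  · exact ((F.equiv : L2 →L[ℂ] L2).comp reflect).continuous
  · exact (reflect.comp (F.equiv : L2 →L[ℂ] L2)).continuous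
  · funext s
    exact fourier_reflect_apply F (simpleFunc_integrable s)

theorem fourier_symm_reflect (F : FourierL2) :
    (F.equiv.symm : L2 →L[ℂ] L2).comp reflect
      = reflect.comp (F.equiv.symm : L2 →L[ℂ] L2) := by
  refine ContinuousLinearMap.ext fun ψ => ?_
  apply F.equiv.injective
  have h1 : F.equiv (reflect (F.equiv.symm ψ)) = reflect (F.equiv (F.equiv.symm ψ)) :=
    congrFun (congrArg (⇑) (fourier_reflect F)) (F.equiv.symm ψ)
  simp only [ContinuousLinearMap.comp_apply, ContinuousLinearEquiv.coe_coe]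
  rw [h1, F.equiv.apply_symm_apply, F.equiv.apply_symm_apply]
theorem ae_ne_zero : ∀ᵐ t : ℝ ∂(volume : Measure ℝ), t ≠ 0 := by
  rw [MeasureTheory.ae_iff]
  have : {t : ℝ | ¬ t ≠ 0} = {(0 : ℝ)} := by ext t; simp
  rw [this]
  exact Real.volume_singleton

theorem mul_add_symbol {a b : ℝ → ℂ} (ha : MemLp a ⊤ (volume : Measure ℝ))
    (hb : MemLp b ⊤ (volume : Measure ℝ)) :
    mul a + mul b = mul (fun t => a t + b t) := by
  ext f
  filter_upwards [mul_coeFn ha f, mul_coeFn hb f, mul_coeFn (a := fun t => a t + b t) (by simpa [Pi.add_def] using ha.add hb) f,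
    Lp.coeFn_add (mul a f) (mul b f)] with t h1 h2 h3 h4
  simp only [ContinuousLinearMap.add_apply]
  rw [h4]
  simp only [Pi.add_apply]
  rw [h1, h2, h3, add_mul]

theorem chiPlus_neg_memℒp : MemLp (fun t : ℝ => chiPlus (-t)) ⊤ (volume : Measure ℝ) :=
  memℒp_reflect chiPlus_memℒp

theorem chiPlus_complement :
    mul chiPlus + mul (fun t => chiPlus (-t)) = ContinuousLinearMap.id ℂ L2 := by
  rw [mul_add_symbol chiPlus_memℒp chiPlus_neg_memℒp, ← mul_one']
  apply mul_congr
  filter_upwards [ae_ne_zero] with t ht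
  rcases lt_or_gt_of_ne ht with h | h
  · simp [chiPlus, Set.indicator_apply, not_lt.mpr h.le, h, neg_pos.mpr h]
  · simp [chiPlus, Set.indicator_apply, h, not_lt.mpr (neg_nonpos.mpr h.le), asymm h]

theorem proj_add_reflect (g : L2) :
    mul chiPlus g + reflect (mul chiPlus (reflect g)) = g := by
  have h1 : reflect (mul chiPlus (reflect g))
      = mul (fun t => chiPlus (-t)) (reflect (reflect g)) :=
    congrFun (congrArg (⇑) (reflect_mul chiPlus_memℒp)) (reflect g)
  have h2 : reflect (reflect g) = g :=
    congrFun (congrArg (⇑) reflect_reflect) g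
  rw [h1, h2]
  exact congrFun (congrArg (⇑) chiPlus_complement) g

theorem compress_comp (S T : L2 →L[ℂ] L2) :
    compress (S.comp T) = (compress S).comp (compress T)
      + (compress (S.comp reflect)).comp (compress (reflect.comp T)) := by
  refine ContinuousLinearMap.ext fun φ => ?_
  apply Subtype.ext
  have key : T φ.val = mul chiPlus (T φ.val) + reflect (mul chiPlus (reflect (T φ.val))) :=
    (proj_add_reflect (T φ.val)).symm
  calc (compress (S.comp T) φ : L2)
      = mul chiPlus (S (T φ.val)) := rfl
    _ = mul chiPlus (S (mul chiPlus (T φ.val)))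
        + mul chiPlus (S (reflect (mul chiPlus (reflect (T φ.val))))) := by
        rw [← map_add, ← map_add]
        exact congrArg _ (congrArg _ key)
    _ = _ := rfl

theorem compress_id : compress (ContinuousLinearMap.id ℂ L2) = 1 := by
  refine ContinuousLinearMap.ext fun φ => ?_
  apply Subtype.ext
  apply Lp.ext
  show (mul chiPlus φ.val : ℝ → ℂ) =ᵐ[volume] (φ.val : ℝ → ℂ)
  filter_upwards [mul_coeFn chiPlus_memℒp φ.val, φ.2, ae_ne_zero] with t h1 h2 h3
  rw [h1]
  rcases lt_or_gt_of_ne h3 with h | h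
  · rw [h2 h]; ring
  · simp [chiPlus, Set.indicator_apply, h]

theorem compress_reflect_zero : compress reflect = 0 := by
  refine ContinuousLinearMap.ext fun φ => ?_
  apply Subtype.ext
  apply Lp.ext
  show (mul chiPlus (reflect φ.val) : ℝ → ℂ) =ᵐ[volume] _
  have hφ : ∀ᵐ t : ℝ ∂volume, 0 < t → (φ.val : ℝ → ℂ) (-t) = 0 := by
    have := negMP.quasiMeasurePreserving.ae (φ.2)
    filter_upwards [this] with t ht hlt
    exact ht (by simpa using hlt)
  filter_upwards [mul_coeFn chiPlus_memℒp (reflect φ.val), reflect_coeFn φ.val, hφ,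
    Lp.coeFn_zero ℂ 2 (volume : Measure ℝ)] with t h1 h2 h3 h4
  rw [h1, h2]
  show chiPlus t * (φ.val : ℝ → ℂ) (-t) = ((0 : Lp2Plus) : L2) t
  have hz : (((0 : Lp2Plus) : L2) : ℝ → ℂ) t = 0 := h4
  rw [hz]
  by_cases h : 0 < t
  · rw [h3 h]; ring
  · simp [chiPlus, Set.indicator_apply, h]
theorem W0_comp (F : FourierL2) {a b : ℝ → ℂ} (ha : MemLp a ⊤ (volume : Measure ℝ))
    (hb : MemLp b ⊤ (volume : Measure ℝ)) :
    (W0 F a).comp (W0 F b) = W0 F (fun t => a t * b t) := by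
  refine ContinuousLinearMap.ext fun f => ?_
  simp only [W0, ContinuousLinearMap.comp_apply, ContinuousLinearEquiv.coe_coe]
  rw [F.equiv.apply_symm_apply]
  exact congrArg _ (DFunLike.congr_fun (mul_mul ha hb) (F.equiv f))

theorem W0_one (F : FourierL2) : W0 F (fun _ => (1 : ℂ)) = ContinuousLinearMap.id ℂ L2 := by
  refine ContinuousLinearMap.ext fun f => ?_
  simp only [W0, ContinuousLinearMap.comp_apply, ContinuousLinearEquiv.coe_coe,
    ContinuousLinearMap.id_apply]
  rw [DFunLike.congr_fun mul_one' (F.equiv f)]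
  exact F.equiv.symm_apply_apply f

theorem W0_congr (F : FourierL2) {a b : ℝ → ℂ} (hab : a =ᵐ[volume] b) :
    W0 F a = W0 F b := by
  rw [W0, W0, mul_congr hab]

theorem reflect_W0 (F : FourierL2) {b : ℝ → ℂ} (hb : MemLp b ⊤ (volume : Measure ℝ)) :
    reflect.comp (W0 F b) = (W0 F (fun t => b (-t))).comp reflect := by
  refine ContinuousLinearMap.ext fun f => ?_
  simp only [W0, ContinuousLinearMap.comp_apply, ContinuousLinearEquiv.coe_coe]
  have h1 : reflect ((F.equiv.symm : L2 →L[ℂ] L2) (mul b (F.equiv f)))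
      = F.equiv.symm (reflect (mul b (F.equiv f))) :=
    (DFunLike.congr_fun (fourier_symm_reflect F) (mul b (F.equiv f))).symm
  have h2 : reflect (mul b (F.equiv f)) = mul (fun t => b (-t)) (reflect (F.equiv f)) :=
    DFunLike.congr_fun (reflect_mul hb) (F.equiv f)
  have h3 : reflect ((F.equiv : L2 →L[ℂ] L2) f) = F.equiv (reflect f) :=
    (DFunLike.congr_fun (fourier_reflect F) f).symm
  simp only [ContinuousLinearEquiv.coe_coe] at h1 h3
  rw [h1, h2, h3]

theorem W_congr (F : FourierL2) {a b : ℝ → ℂ} (hab : a =ᵐ[volume] b) :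
    W F a = W F b := by rw [W, W, W0_congr F hab]

theorem H_congr (F : FourierL2) {a b : ℝ → ℂ} (hab : a =ᵐ[volume] b) :
    H F a = H F b := by rw [H, H, W0_congr F hab]

theorem W_one (F : FourierL2) : W F (fun _ => (1 : ℂ)) = 1 := by
  rw [W, W0_one, compress_id]

theorem H_one (F : FourierL2) : H F (fun _ => (1 : ℂ)) = 0 := by
  rw [H, W0_one, ContinuousLinearMap.id_comp, compress_reflect_zero]

/-- Identity (I): `W(uv) = W(u)W(v) + H(u)H(ṽ)`. -/
theorem W_mul_symbol (F : FourierL2) {u v : ℝ → ℂ} (hu : MemLp u ⊤ (volume : Measure ℝ))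
    (hv : MemLp v ⊤ (volume : Measure ℝ)) :
    W F (fun t => u t * v t)
      = (W F u).comp (W F v) + (H F u).comp (H F (fun t => v (-t))) := by
  rw [W, ← W0_comp F hu hv, compress_comp, reflect_W0 F hv]
  rfl

/-- Identity (II): `H(uv) = W(u)H(v) + H(u)W(ṽ)`. -/
theorem H_mul_symbol (F : FourierL2) {u v : ℝ → ℂ} (hu : MemLp u ⊤ (volume : Measure ℝ))
    (hv : MemLp v ⊤ (volume : Measure ℝ)) :
    H F (fun t => u t * v t)
      = (W F u).comp (H F v) + (H F u).comp (W F (fun t => v (-t))) := by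
  have h1 : (W0 F (fun t => u t * v t)).comp reflect
      = (W0 F u).comp ((W0 F v).comp reflect) := by
    rw [← W0_comp F hu hv, ContinuousLinearMap.comp_assoc]
  have h2 : reflect.comp ((W0 F v).comp reflect) = W0 F (fun t => v (-t)) := by
    rw [← ContinuousLinearMap.comp_assoc, reflect_W0 F hv, ContinuousLinearMap.comp_assoc,
      reflect_reflect, ContinuousLinearMap.comp_id]
  rw [H, h1, compress_comp, h2]
  rfl
instance : NormedSpace ℂ Lp2Plus := inferInstance
instance : Ring (Lp2Plus →L[ℂ] Lp2Plus) := inferInstance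
theorem ring_lemma {R : Type*} [Ring R] (Wa Ha War Har Wc Hct Hai Wari Hari E K : R)
    (eqA : Wa * Hct = Har - Ha * Wc)
    (eqB : Har * Hct = Wa - War * Wc)
    (eqC : Wa * Hai = -(Ha * Wari))
    (eqD : Har * Hai = 1 - War * Wari)
    (eqE : Hari * Har = Wc - Wari * Wa)
    (eqF : Hari * Wa = -(Wari * Har))
    (hE1 : Wc * E = 1) (hE2 : E * Wc = 1)
    (hK : K = (1 - Hct) * (E * Wari) + Hai) :
    (Wa + Har) * K = 1 ∧ K * (Wa + Har) = 1 := by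
  have key1 : (Wa + Har) * (1 - Hct) = (Ha + War) * Wc := by
    have h1 : (Wa + Har) * (1 - Hct) = (Wa + Har) - (Wa * Hct + Har * Hct) := by noncomm_ring
    rw [h1, eqA, eqB]; noncomm_ring
  have right_inv : (Wa + Har) * K = 1 := by
    have h2 : (Wa + Har) * K
        = ((Wa + Har) * (1 - Hct)) * (E * Wari) + (Wa * Hai + Har * Hai) := by
      rw [hK]; noncomm_ring
    rw [h2, key1, eqC, eqD]
    have h3 : (Ha + War) * Wc * (E * Wari) = (Ha + War) * ((Wc * E) * Wari) := by
      noncomm_ring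
    rw [h3, hE1, one_mul]
    noncomm_ring
  have key2 : (Wari + Hari) * (Wa + Har) = Wc := by
    have h4 : (Wari + Hari) * (Wa + Har)
        = Wari * Wa + Wari * Har + (Hari * Wa + Hari * Har) := by noncomm_ring
    rw [h4, eqE, eqF]; noncomm_ring
  have left_inv : (E * (Wari + Hari)) * (Wa + Har) = 1 := by
    rw [mul_assoc, key2, hE2]
  have hKL : K = E * (Wari + Hari) := by
    calc K = 1 * K := (one_mul K).symm
      _ = ((E * (Wari + Hari)) * (Wa + Har)) * K := by rw [left_inv]
      _ = (E * (Wari + Hari)) * ((Wa + Har) * K) := by rw [mul_assoc]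
      _ = E * (Wari + Hari) := by rw [right_inv, mul_one]
  exact ⟨right_inv, by rw [hKL, left_inv]⟩
theorem memℒp_mul {a b : ℝ → ℂ} (ha : MemLp a ⊤ (volume : Measure ℝ))
    (hb : MemLp b ⊤ (volume : Measure ℝ)) :
    MemLp (fun t => a t * b t) ⊤ (volume : Measure ℝ) := by
  have := hb.smul (r := ⊤) ha
  simpa [Pi.smul_apply, smul_eq_mul, Pi.mul_def] using this

set_option maxHeartbeats 1000000 in
/-- If `a` is invertible in `L^∞(ℝ)` and `W(a ã⁻¹)` is invertible, then `W(a)+H(ã)` is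
invertible with inverse `(I - H(ã a⁻¹)) W(a ã⁻¹)⁻¹ W(ã⁻¹) + H(a⁻¹)`. -/
theorem inverse_W_plus_H_reflected_symbol
    (F : FourierL2) (a : ℝ → ℂ) (ha : InvertibleLinf a)
    (E : Lp2Plus →L[ℂ] Lp2Plus)
    (hE1 : (W F (fun t => a t * (a (-t))⁻¹)).comp E = 1)
    (hE2 : E.comp (W F (fun t => a t * (a (-t))⁻¹)) = 1)
    (K : Lp2Plus →L[ℂ] Lp2Plus)
    (hK : K = ((1 : Lp2Plus →L[ℂ] Lp2Plus) - H F (fun t => a (-t) * (a t)⁻¹)).comp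
        (E.comp (W F (fun t => (a (-t))⁻¹))) + H F (fun t => (a t)⁻¹)) :
    (W F a + H F (fun t => a (-t))).comp K = 1 ∧
      K.comp (W F a + H F (fun t => a (-t))) = 1 := by
  obtain ⟨hma, hne, hmai⟩ := ha
  have hmar : MemLp (fun t => a (-t)) ⊤ (volume : Measure ℝ) := memℒp_reflect hma
  have hmari : MemLp (fun t => (a (-t))⁻¹) ⊤ (volume : Measure ℝ) := memℒp_reflect hmai
  have hmct : MemLp (fun t => a (-t) * (a t)⁻¹) ⊤ (volume : Measure ℝ) := memℒp_mul hmar hmai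
  have hne' : ∀ᵐ t : ℝ ∂(volume : Measure ℝ), a (-t) ≠ 0 :=
    negMP.quasiMeasurePreserving.ae hne
  -- Identity (A): `H(ã) = W(a) H(ã a⁻¹) + H(a) W(a ã⁻¹)`.
  have eqA : W F a * H F (fun t => a (-t) * (a t)⁻¹)
      = H F (fun t => a (-t)) - H F a * W F (fun t => a t * (a (-t))⁻¹) := by
    have raw := H_mul_symbol F (u := a) (v := fun t => a (-t) * (a t)⁻¹) hma hmct
    beta_reduce at raw
    have hL : H F (fun t => a t * (a (-t) * (a t)⁻¹)) = H F (fun t => a (-t)) := by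
      apply H_congr
      filter_upwards [hne] with t h
      field_simp
    have hR : (fun t : ℝ => a (- -t) * (a (-t))⁻¹) = fun t => a t * (a (-t))⁻¹ := by
      funext t; rw [neg_neg]
    rw [hL, hR] at raw
    rw [eq_sub_iff_add_eq]
    exact raw.symm
  -- Identity (B): `W(a) = W(ã) W(a ã⁻¹) + H(ã) H(ã a⁻¹)`.
  have eqB : H F (fun t => a (-t)) * H F (fun t => a (-t) * (a t)⁻¹)
      = W F a - W F (fun t => a (-t)) * W F (fun t => a t * (a (-t))⁻¹) := by
    have raw := W_mul_symbol F (u := fun t => a (-t)) (v := fun t => a t * (a (-t))⁻¹)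
      hmar (memℒp_mul hma hmari)
    beta_reduce at raw
    have hL : W F (fun t => a (-t) * (a t * (a (-t))⁻¹)) = W F a := by
      apply W_congr
      filter_upwards [hne'] with t h
      field_simp
    have hR : (fun t : ℝ => a (-t) * (a (- -t))⁻¹) = fun t => a (-t) * (a t)⁻¹ := by
      funext t; rw [neg_neg]
    rw [hL, hR] at raw
    rw [eq_sub_iff_add_eq, add_comm]
    exact raw.symm
  -- Identity (C): `0 = W(a) H(a⁻¹) + H(a) W(ã⁻¹)`.
  have eqC : W F a * H F (fun t => (a t)⁻¹)
      = -(H F a * W F (fun t => (a (-t))⁻¹)) := by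
    have raw := H_mul_symbol F (u := a) (v := fun t => (a t)⁻¹) hma hmai
    beta_reduce at raw
    have hL : H F (fun t => a t * (a t)⁻¹) = H F (fun _ => (1 : ℂ)) := by
      apply H_congr
      filter_upwards [hne] with t h
      field_simp
    rw [hL, H_one] at raw
    rw [eq_neg_iff_add_eq_zero]
    exact raw.symm
  -- Identity (D): `1 = W(ã) W(ã⁻¹) + H(ã) H(a⁻¹)`.
  have eqD : H F (fun t => a (-t)) * H F (fun t => (a t)⁻¹)
      = 1 - W F (fun t => a (-t)) * W F (fun t => (a (-t))⁻¹) := by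
    have raw := W_mul_symbol F (u := fun t => a (-t)) (v := fun t => (a (-t))⁻¹) hmar hmari
    beta_reduce at raw
    have hL : W F (fun t => a (-t) * (a (-t))⁻¹) = W F (fun _ => (1 : ℂ)) := by
      apply W_congr
      filter_upwards [hne'] with t h
      field_simp
    have hR : (fun t : ℝ => (a (- -t))⁻¹) = fun t => (a t)⁻¹ := by
      funext t; rw [neg_neg]
    rw [hL, hR, W_one] at raw
    rw [eq_sub_iff_add_eq, add_comm]
    exact raw.symm
  -- Identity (E): `W(a ã⁻¹) = W(ã⁻¹) W(a) + H(ã⁻¹) H(ã)`.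
  have eqE : H F (fun t => (a (-t))⁻¹) * H F (fun t => a (-t))
      = W F (fun t => a t * (a (-t))⁻¹) - W F (fun t => (a (-t))⁻¹) * W F a := by
    have raw := W_mul_symbol F (u := fun t => (a (-t))⁻¹) (v := a) hmari hma
    beta_reduce at raw
    have hL : W F (fun t => (a (-t))⁻¹ * a t) = W F (fun t => a t * (a (-t))⁻¹) := by
      apply W_congr
      exact Eventually.of_forall fun t => mul_comm _ _
    rw [hL] at raw
    rw [eq_sub_iff_add_eq, add_comm]
    exact raw.symm
  -- Identity (F): `0 = W(ã⁻¹) H(ã) + H(ã⁻¹) W(a)`.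
  have eqF : H F (fun t => (a (-t))⁻¹) * W F a
      = -(W F (fun t => (a (-t))⁻¹) * H F (fun t => a (-t))) := by
    have raw := H_mul_symbol F (u := fun t => (a (-t))⁻¹) (v := fun t => a (-t)) hmari hmar
    beta_reduce at raw
    have hL : H F (fun t => (a (-t))⁻¹ * a (-t)) = H F (fun _ => (1 : ℂ)) := by
      apply H_congr
      filter_upwards [hne'] with t h
      field_simp
    have hR : (fun t : ℝ => a (- -t)) = a := by
      funext t; rw [neg_neg]
    rw [hL, hR, H_one] at raw
    rw [eq_neg_iff_add_eq_zero, add_comm]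
    exact raw.symm
  have hE1' : W F (fun t => a t * (a (-t))⁻¹) * E = 1 := hE1
  have hE2' : E * W F (fun t => a t * (a (-t))⁻¹) = 1 := hE2
  have hK' : K = (1 - H F (fun t => a (-t) * (a t)⁻¹))
      * (E * W F (fun t => (a (-t))⁻¹)) + H F (fun t => (a t)⁻¹) := hK
  have main := ring_lemma (W F a) (H F a) (W F (fun t => a (-t))) (H F (fun t => a (-t)))
    (W F (fun t => a t * (a (-t))⁻¹)) (H F (fun t => a (-t) * (a t)⁻¹))
    (H F (fun t => (a t)⁻¹)) (W F (fun t => (a (-t))⁻¹)) (H F (fun t => (a (-t))⁻¹))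
    E K eqA eqB eqC eqD eqE eqF hE1' hE2' hK'
  exact ⟨main.1, main.2⟩

end WienerHopf
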